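/- The family {a_n/√π}_{n ∈ ℤ} is an orthonormal (Hilbert) basis of L²(ℝ, ℂ): it is orthonormal and its closed linear span is all of L²(ℝ, ℂ). -/

import Mathlib

open MeasureTheory Set Complex Real

noncomputable section

lemma tp_ne (t : ℝ) : (t : ℂ) + Complex.I ≠ 0 := by
  intro h
  have := congrArg Complex.im h
  simp at this

lemma tm_ne (t : ℝ) : (t : ℂ) - Complex.I ≠ 0 := by
  intro h
  have := congrArg Complex.im h
  simp at this

-- change of variables via tan
lemma cov {F : Type*} [NormedAddCommGroup F] [NormedSpace ℝ F] (g : ℝ → F) :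
    ∫ t, g t = ∫ θ in Ioo (-(π/2)) (π/2), ((Real.cos θ)^2)⁻¹ • g (Real.tan θ) := by
  have hd : ∀ x ∈ Ioo (-(π/2)) (π/2),
      HasDerivWithinAt Real.tan (((Real.cos x)^2)⁻¹) (Ioo (-(π/2)) (π/2)) x := by
    intro x hx
    have hc : Real.cos x ≠ 0 := (Real.cos_pos_of_mem_Ioo hx).ne'
    simpa [one_div] using (Real.hasDerivAt_tan hc).hasDerivWithinAt
  have h := integral_image_eq_integral_abs_deriv_smul measurableSet_Ioo hd Real.injOn_tan g
  rw [Real.image_tan_Ioo] at h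
  simp only [Measure.restrict_univ] at h
  rw [h]
  refine setIntegral_congr_fun measurableSet_Ioo fun x hx => ?_
  rw [_root_.abs_of_nonneg (by positivity : (0:ℝ) ≤ ((Real.cos x)^2)⁻¹)]

lemma cov_int {F : Type*} [NormedAddCommGroup F] [NormedSpace ℝ F] (g : ℝ → F) :
    Integrable g ↔ IntegrableOn (fun θ => ((Real.cos θ)^2)⁻¹ • g (Real.tan θ))
      (Ioo (-(π/2)) (π/2)) := by
  have hd : ∀ x ∈ Ioo (-(π/2)) (π/2),
      HasDerivWithinAt Real.tan (((Real.cos x)^2)⁻¹) (Ioo (-(π/2)) (π/2)) x := by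
    intro x hx
    have hc : Real.cos x ≠ 0 := (Real.cos_pos_of_mem_Ioo hx).ne'
    simpa [one_div] using (Real.hasDerivAt_tan hc).hasDerivWithinAt
  have h := integrableOn_image_iff_integrableOn_abs_deriv_smul measurableSet_Ioo hd
    Real.injOn_tan g
  rw [Real.image_tan_Ioo] at h
  rw [← integrableOn_univ, h]
  refine integrableOn_congr_fun (fun x hx => ?_) measurableSet_Ioo
  rw [_root_.abs_of_nonneg (by positivity : (0:ℝ) ≤ ((Real.cos x)^2)⁻¹)]


lemma exp_neg_theta (θ : ℝ) :
    Complex.exp (-θ * Complex.I) = (Real.cos θ : ℂ) - (Real.sin θ : ℂ) * Complex.I := by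
  rw [show (-θ : ℂ) * Complex.I = ((-θ : ℝ) : ℂ) * Complex.I by push_cast; ring,
    Complex.exp_mul_I, ← Complex.ofReal_cos, ← Complex.ofReal_sin]
  push_cast [Real.cos_neg, Real.sin_neg]
  ring

lemma exp_pos_theta (θ : ℝ) :
    Complex.exp (θ * Complex.I) = (Real.cos θ : ℂ) + (Real.sin θ : ℂ) * Complex.I := by
  rw [show (θ : ℂ) * Complex.I = ((θ : ℝ) : ℂ) * Complex.I by norm_num,
    Complex.exp_mul_I, ← Complex.ofReal_cos, ← Complex.ofReal_sin]

lemma tan_add_I (θ : ℝ) (hc : Real.cos θ ≠ 0) :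
    ((Real.tan θ : ℂ) + Complex.I) * (Real.cos θ : ℂ)
      = Complex.I * Complex.exp (-θ * Complex.I) := by
  have hcc : (Real.cos θ : ℂ) ≠ 0 := Complex.ofReal_ne_zero.2 hc
  rw [exp_neg_theta, Real.tan_eq_sin_div_cos, Complex.ofReal_div, add_mul,
    div_mul_cancel₀ _ hcc]
  linear_combination ((Real.sin θ : ℂ)) * Complex.I_sq

lemma tan_sub_I (θ : ℝ) (hc : Real.cos θ ≠ 0) :
    ((Real.tan θ : ℂ) - Complex.I) * (Real.cos θ : ℂ)
      = -Complex.I * Complex.exp (θ * Complex.I) := by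
  have hcc : (Real.cos θ : ℂ) ≠ 0 := Complex.ofReal_ne_zero.2 hc
  rw [exp_pos_theta, Real.tan_eq_sin_div_cos, Complex.ofReal_div, sub_mul,
    div_mul_cancel₀ _ hcc]
  linear_combination ((Real.sin θ : ℂ)) * Complex.I_sq

lemma key1 (θ : ℝ) (hc : Real.cos θ ≠ 0) :
    ((Real.tan θ : ℂ) + Complex.I) / ((Real.tan θ : ℂ) - Complex.I)
      = -Complex.exp (-(2*θ) * Complex.I) := by
  have hcc : (Real.cos θ : ℂ) ≠ 0 := Complex.ofReal_ne_zero.2 hc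
  rw [div_eq_iff (tm_ne _)]
  apply mul_right_cancel₀ hcc
  rw [tan_add_I θ hc, mul_assoc, tan_sub_I θ hc]
  have h3 : Complex.exp (-(2*θ:ℂ) * Complex.I) * Complex.exp (θ * Complex.I)
      = Complex.exp (-θ * Complex.I) := by
    rw [← Complex.exp_add, show (-(2*θ:ℂ)*Complex.I + θ*Complex.I) = -θ*Complex.I by ring]
  linear_combination (-Complex.I) * h3

lemma key2 (θ : ℝ) (hc : Real.cos θ ≠ 0) :
    ((Real.tan θ : ℂ) - Complex.I)⁻¹
      = Complex.I * (Real.cos θ : ℂ) * Complex.exp (-θ * Complex.I) := by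
  have hcc : (Real.cos θ : ℂ) ≠ 0 := Complex.ofReal_ne_zero.2 hc
  have h2 : Complex.exp (-θ * Complex.I) * Complex.exp (θ * Complex.I) = 1 := by
    rw [← Complex.exp_add]; simp
  apply inv_eq_of_mul_eq_one_left
  apply mul_right_cancel₀ hcc
  rw [mul_assoc, tan_sub_I θ hc, one_mul]
  linear_combination ((Real.cos θ:ℂ)) * h2
    + (-(Real.cos θ:ℂ) * Complex.exp (-θ*Complex.I) * Complex.exp (θ*Complex.I)) * Complex.I_sq

-- conjugate of basis function
lemma conj_a (n : ℤ) (t : ℝ) :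
    (starRingEnd ℂ) (((t:ℂ) - Complex.I)^n / ((t:ℂ) + Complex.I)^(n+1))
      = (((t:ℂ) + Complex.I)/((t:ℂ) - Complex.I))^n * ((t:ℂ) - Complex.I)⁻¹ := by
  rw [map_div₀, map_zpow₀, map_zpow₀, map_sub, map_add, Complex.conj_ofReal, Complex.conj_I]
  simp only [sub_neg_eq_add, ← sub_eq_add_neg]
  rw [zpow_add₀ (tm_ne t) n 1, zpow_one, div_zpow, div_mul_eq_div_div, div_eq_mul_inv]

lemma prod_a (n m : ℤ) (t : ℝ) :
    ((((t:ℂ) + Complex.I)/((t:ℂ) - Complex.I))^n * ((t:ℂ) - Complex.I)⁻¹) *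
      (((t:ℂ) - Complex.I)^m / ((t:ℂ) + Complex.I)^(m+1))
      = ((1 + t^2 : ℝ) : ℂ)⁻¹ * (((t:ℂ) + Complex.I)/((t:ℂ) - Complex.I))^(n - m) := by
  have hp := tp_ne t; have hq := tm_ne t
  have hpsi : ((t:ℂ) + Complex.I)/((t:ℂ) - Complex.I) ≠ 0 := div_ne_zero hp hq
  have h2 : (((t:ℂ) - Complex.I)^m / ((t:ℂ) + Complex.I)^(m+1))
      = ((((t:ℂ) + Complex.I)/((t:ℂ) - Complex.I))^m)⁻¹ * ((t:ℂ) + Complex.I)⁻¹ := by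
    rw [zpow_add₀ hp m 1, zpow_one, div_zpow, inv_div, div_mul_eq_div_div, div_eq_mul_inv]
  rw [h2]
  have h3 : ((1 + t^2 : ℝ) : ℂ) = ((t:ℂ) - Complex.I) * ((t:ℂ) + Complex.I) := by
    push_cast
    linear_combination Complex.I_sq
  rw [h3, mul_inv, zpow_sub₀ hpsi, div_eq_mul_inv]
  ring

lemma exp_pow_eq (k : ℤ) (θ : ℝ) : (-Complex.exp (-(2*θ) * Complex.I))^k
    = (-1)^k * Complex.exp ((-(2*k) * Complex.I) * θ) := by
  rw [show -Complex.exp (-(2*(θ:ℂ))*Complex.I) = (-1) * Complex.exp (-(2*(θ:ℂ))*Complex.I) by ring,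
    mul_zpow, show ((-(2*(k:ℂ))) * Complex.I) * (θ:ℂ) = (k:ℂ) * (-(2*(θ:ℂ)) * Complex.I) by
      push_cast; ring, Complex.exp_int_mul]

lemma int_exp_zero {k : ℤ} (hk : k ≠ 0) :
    ∫ θ in Ioo (-(π/2)) (π/2), Complex.exp ((-(2*(k:ℂ)) * Complex.I) * θ) = 0 := by
  have hle : -(π/2) ≤ π/2 := by linarith [Real.pi_pos]
  have hc : (-(2*(k:ℂ)) * Complex.I) ≠ 0 := by
    simp [Complex.I_ne_zero]
    exact_mod_cast hk
  rw [← integral_Ioc_eq_integral_Ioo, ← intervalIntegral.integral_of_le hle,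
    integral_exp_mul_complex hc]
  have e1 : (-(2*(k:ℂ)) * Complex.I) * ((π/2 : ℝ) : ℂ) = ((-k : ℤ) : ℂ) * ((π:ℝ) * Complex.I) := by
    push_cast; ring
  have e2 : (-(2*(k:ℂ)) * Complex.I) * ((-(π/2) : ℝ) : ℂ) = ((k : ℤ) : ℂ) * ((π:ℝ) * Complex.I) := by
    push_cast; ring
  rw [e1, e2, Complex.exp_int_mul, Complex.exp_int_mul, Complex.exp_pi_mul_I]
  rw [zpow_neg, ← inv_zpow, inv_neg, inv_one, sub_self, zero_div]

lemma int_pow_exp (k : ℤ) :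
    ∫ θ in Ioo (-(π/2)) (π/2), (-Complex.exp (-(2*θ) * Complex.I))^k
      = if k = 0 then (π:ℂ) else 0 := by
  by_cases hk : k = 0
  · subst hk
    simp only [zpow_zero, if_true]
    rw [setIntegral_const]
    rw [Real.volume_real_Ioo_of_le (by linarith [Real.pi_pos]), show (π/2 - -(π/2)) = π by ring]
    rw [Complex.real_smul, mul_one]
  · simp only [hk, if_false]
    calc ∫ θ in Ioo (-(π/2)) (π/2), (-Complex.exp (-(2*θ) * Complex.I))^k
        = ∫ θ in Ioo (-(π/2)) (π/2), (-1:ℂ)^k * Complex.exp ((-(2*(k:ℂ)) * Complex.I) * θ) := by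
          refine setIntegral_congr_fun measurableSet_Ioo fun θ _ => ?_
          exact exp_pow_eq k θ
      _ = (-1:ℂ)^k * ∫ θ in Ioo (-(π/2)) (π/2), Complex.exp ((-(2*(k:ℂ)) * Complex.I) * θ) := by
          rw [integral_const_mul]
      _ = 0 := by rw [int_exp_zero hk, mul_zero]

lemma norm_a_sq (n : ℤ) (t : ℝ) :
    ‖((t:ℂ) - Complex.I)^n / ((t:ℂ) + Complex.I)^(n+1)‖^2 = (1 + t^2)⁻¹ := by
  have h1 : (0:ℝ) < 1 + t^2 := by positivity
  set r := Real.sqrt (1 + t^2) with hr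
  have hrpos : 0 < r := Real.sqrt_pos.2 h1
  have hm : ‖(t:ℂ) - Complex.I‖ = r := by
    rw [Complex.norm_def, hr]
    congr 1
    simp [Complex.normSq_apply]
    ring
  have hp : ‖(t:ℂ) + Complex.I‖ = r := by
    rw [Complex.norm_def, hr]
    congr 1
    simp [Complex.normSq_apply]
    ring
  rw [norm_div, norm_zpow, norm_zpow, hm, hp]
  rw [← zpow_sub₀ hrpos.ne', show n - (n+1) = -1 by ring]
  rw [zpow_neg, zpow_one, ← Real.sq_sqrt h1.le, ← hr]
  rw [inv_pow]

lemma cont_a (n : ℤ) : Continuous (fun t : ℝ => ((t:ℂ) - Complex.I)^n / ((t:ℂ) + Complex.I)^(n+1)) := by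
  have h1 : Continuous fun t : ℝ => ((t:ℂ) - Complex.I) := by continuity
  have h2 : Continuous fun t : ℝ => ((t:ℂ) + Complex.I) := by continuity
  exact (h1.zpow₀ n fun t => Or.inl (tm_ne t)).div
    (h2.zpow₀ (n+1) fun t => Or.inl (tp_ne t))
    (fun t => zpow_ne_zero _ (tp_ne t))

lemma memA (n : ℤ) :
    MemLp (fun t : ℝ => ((t:ℂ) - Complex.I)^n / ((t:ℂ) + Complex.I)^(n+1)) 2
      (volume : Measure ℝ) := by
  refine (memLp_two_iff_integrable_sq_norm (cont_a n).aestronglyMeasurable).2 ?_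
  exact integrable_inv_one_add_sq.congr
    (Filter.Eventually.of_forall fun t => (norm_a_sq n t).symm)

lemma integral_conj_mul (n m : ℤ) :
    ∫ t : ℝ, (starRingEnd ℂ) (((t:ℂ) - Complex.I)^n / ((t:ℂ) + Complex.I)^(n+1)) *
      (((t:ℂ) - Complex.I)^m / ((t:ℂ) + Complex.I)^(m+1)) = if n = m then (π:ℂ) else 0 := by
  have step := cov (fun t : ℝ => (starRingEnd ℂ) (((t:ℂ) - Complex.I)^n / ((t:ℂ) + Complex.I)^(n+1)) *
      (((t:ℂ) - Complex.I)^m / ((t:ℂ) + Complex.I)^(m+1)))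
  rw [step]
  have hptw : ∀ θ ∈ Ioo (-(π/2)) (π/2), ((Real.cos θ)^2)⁻¹ •
      ((fun t : ℝ => (starRingEnd ℂ) (((t:ℂ) - Complex.I)^n / ((t:ℂ) + Complex.I)^(n+1)) *
        (((t:ℂ) - Complex.I)^m / ((t:ℂ) + Complex.I)^(m+1))) (Real.tan θ))
      = (-Complex.exp (-(2*θ) * Complex.I))^(n-m) := by
    intro θ hθ
    have hc : Real.cos θ ≠ 0 := (Real.cos_pos_of_mem_Ioo hθ).ne'
    have hcc : ((Real.cos θ)^2 : ℝ) ≠ 0 := pow_ne_zero _ hc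
    simp only
    rw [conj_a, prod_a, key1 θ hc, Complex.real_smul]
    rw [show ((1 + Real.tan θ^2 : ℝ) : ℂ)⁻¹ = (((Real.cos θ)^2 : ℝ) : ℂ) by
      rw [← Complex.ofReal_inv, Real.inv_one_add_tan_sq hc]]
    rw [← mul_assoc, ← Complex.ofReal_mul, inv_mul_cancel₀ hcc, Complex.ofReal_one, one_mul]
  rw [setIntegral_congr_fun measurableSet_Ioo hptw, int_pow_exp]
  simp [sub_eq_zero]

lemma measurable_tan' : Measurable Real.tan := by
  have : Real.tan = fun x => Real.sin x / Real.cos x :=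
    funext fun x => Real.tan_eq_sin_div_cos x
  rw [this]
  exact Real.measurable_sin.div Real.measurable_cos

lemma complete_aux (f : Lp ℂ 2 (volume : Measure ℝ))
    (h0 : ∀ n : ℤ, ∫ t : ℝ, (starRingEnd ℂ)
        (((t:ℂ) - Complex.I)^n / ((t:ℂ) + Complex.I)^(n+1)) * f t = 0) :
    f = 0 := by
  haveI : Fact (0 < π) := ⟨Real.pi_pos⟩
  set G : ℝ → ℂ := fun θ => Complex.I * Complex.exp (-θ*Complex.I) *
    (((Real.cos θ)⁻¹ : ℝ) : ℂ) * f (Real.tan θ) with hG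
  have hfm : StronglyMeasurable (⇑f) := Lp.stronglyMeasurable f
  have hGm : Measurable G := by
    apply Measurable.mul
    · apply Measurable.mul
      · apply Measurable.mul measurable_const
        exact (Complex.continuous_exp.comp (by continuity)).measurable
      · exact Complex.measurable_ofReal.comp Real.measurable_cos.inv
    · exact hfm.measurable.comp measurable_tan'
  -- pointwise transformation
  have hptw : ∀ n : ℤ, ∀ θ ∈ Ioo (-(π/2)) (π/2), ((Real.cos θ)^2)⁻¹ •
      ((fun t : ℝ => (starRingEnd ℂ) (((t:ℂ)-Complex.I)^n/((t:ℂ)+Complex.I)^(n+1)) * f t)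
        (Real.tan θ))
      = (-Complex.exp (-(2*θ)*Complex.I))^n * G θ := by
    intro n θ hθ
    have hc : Real.cos θ ≠ 0 := (Real.cos_pos_of_mem_Ioo hθ).ne'
    have hcC : ((Real.cos θ : ℝ) : ℂ) ≠ 0 := Complex.ofReal_ne_zero.2 hc
    simp only
    have hcC2 : Complex.cos (θ:ℂ) ≠ 0 := by
      rw [← Complex.ofReal_cos]; exact_mod_cast hcC
    rw [conj_a, key1 θ hc, key2 θ hc, Complex.real_smul, hG]
    push_cast
    field_simp
  have hInt : ∀ n : ℤ, ∫ θ in Ioo (-(π/2)) (π/2),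
      Complex.exp ((-(2*(n:ℂ))*Complex.I)*θ) * G θ = 0 := by
    intro n
    have h1 := h0 n
    rw [cov (fun t => (starRingEnd ℂ)
        (((t:ℂ) - Complex.I)^n / ((t:ℂ) + Complex.I)^(n+1)) * f t)] at h1
    rw [setIntegral_congr_fun measurableSet_Ioo (hptw n)] at h1
    have h2 : ∫ θ in Ioo (-(π/2)) (π/2), (-Complex.exp (-(2*θ)*Complex.I))^n * G θ
        = (-1:ℂ)^n * ∫ θ in Ioo (-(π/2)) (π/2),
            Complex.exp ((-(2*(n:ℂ))*Complex.I)*θ) * G θ := by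
      rw [← integral_const_mul]
      refine setIntegral_congr_fun measurableSet_Ioo fun θ _ => ?_
      rw [exp_pow_eq]; ring
    rw [h2] at h1
    have hne : (-1:ℂ)^n ≠ 0 := zpow_ne_zero _ (by norm_num)
    exact (mul_eq_zero.1 h1).resolve_left hne
  -- function on the circle
  set F : AddCircle π → ℂ := fun x => G ((AddCircle.equivIoc π (-(π/2)) x : ℝ)) with hF
  have hcoe : ∀ θ ∈ Ioc (-(π/2)) (-(π/2)+π), F ↑θ = G θ := by
    intro θ hθ
    have h : (AddCircle.equivIoc π (-(π/2))) ↑θ = ⟨θ, hθ⟩ := by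
      rw [Equiv.apply_eq_iff_eq_symm_apply]; rfl
    simp only [hF, h]
  have hFmeas : Measurable F := by
    have h1 : Measurable fun x : AddCircle π => ((AddCircle.equivIoc π (-(π/2)) x : ℝ)) :=
      measurable_subtype_coe.comp (AddCircle.measurableEquivIoc π (-(π/2))).measurable
    exact hGm.comp h1
  -- norm squared of G
  have hfsq : Integrable (fun t => ‖f t‖^2) volume :=
    (memLp_two_iff_integrable_sq_norm (Lp.aestronglyMeasurable f)).1 (Lp.memLp f)
  have hGsq : ∀ θ, ‖G θ‖^2 = ((Real.cos θ)^2)⁻¹ • ‖f (Real.tan θ)‖^2 := by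
    intro θ
    have he : ‖Complex.exp (-(θ:ℂ)*Complex.I)‖ = 1 := by
      rw [show (-(θ:ℂ)*Complex.I : ℂ) = ((-θ : ℝ):ℂ)*Complex.I by push_cast; ring]
      exact Complex.norm_exp_ofReal_mul_I (-θ)
    rw [hG]
    simp only [norm_mul, Complex.norm_I, he, one_mul, Complex.norm_real, Real.norm_eq_abs,
      smul_eq_mul]
    rw [mul_pow, _root_.sq_abs, inv_pow]
  have hIoo : IntegrableOn (fun θ => ‖G θ‖^2) (Ioo (-(π/2)) (π/2)) volume := by
    have h1 := (cov_int (fun t => ‖f t‖^2)).1 hfsq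
    exact h1.congr_fun (fun θ _ => (hGsq θ).symm) measurableSet_Ioo
  have hIoc : IntegrableOn (fun θ => ‖G θ‖^2) (Ioc (-(π/2)) (-(π/2)+π)) volume := by
    rw [show (-(π/2) + π : ℝ) = π/2 by ring, integrableOn_Ioc_iff_integrableOn_Ioo]
    exact hIoo
  have hFsqm : AEStronglyMeasurable (fun x => ‖F x‖^2) (volume : Measure (AddCircle π)) :=
    ((hFmeas.norm).pow_const 2).aestronglyMeasurable
  have hFsq : Integrable (fun x => ‖F x‖^2) (volume : Measure (AddCircle π)) := by
    rw [← (AddCircle.measurePreserving_mk π (-(π/2))).integrable_comp hFsqm]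
    apply hIoc.congr_fun_ae
    filter_upwards [ae_restrict_mem measurableSet_Ioc] with θ hθ
    simp only [Function.comp_apply, hcoe θ hθ]
  have hF2 : MemLp F 2 (volume : Measure (AddCircle π)) :=
    (memLp_two_iff_integrable_sq_norm hFmeas.aestronglyMeasurable).2 hFsq
  have hπ0 : ENNReal.ofReal π ≠ 0 := by
    simp [ENNReal.ofReal_eq_zero, not_le, Real.pi_pos]
  have hhaar : (AddCircle.haarAddCircle : Measure (AddCircle π))
      = (ENNReal.ofReal π)⁻¹ • (volume : Measure (AddCircle π)) := by
    rw [AddCircle.volume_eq_smul_haarAddCircle, smul_smul,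
      ENNReal.inv_mul_cancel hπ0 ENNReal.ofReal_ne_top, one_smul]
  have hFh : MemLp F 2 (AddCircle.haarAddCircle : Measure (AddCircle π)) := by
    rw [hhaar]
    exact hF2.smul_measure (ENNReal.inv_ne_top.2 hπ0)
  -- Fourier coefficients vanish
  have hfc : ∀ n : ℤ, fourierCoeff F n = 0 := by
    intro n
    rw [fourierCoeff_eq_intervalIntegral F n (-(π/2))]
    have hle : -(π/2) ≤ -(π/2) + π := by linarith [Real.pi_pos]
    have h1 : ∫ x in (-(π/2))..(-(π/2)+π), fourier (-n) (x : AddCircle π) • F ↑x = 0 := by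
      rw [intervalIntegral.integral_of_le hle]
      have hcong : ∀ᵐ (θ : ℝ) ∂(volume.restrict (Ioc (-(π/2)) (-(π/2)+π))),
          fourier (-n) (θ : AddCircle π) • F ↑θ
            = Complex.exp ((-(2*(n:ℂ))*Complex.I)*θ) * G θ := by
        filter_upwards [ae_restrict_mem measurableSet_Ioc] with θ hθ
        rw [hcoe θ hθ, smul_eq_mul]
        congr 1
        rw [fourier_coe_apply]
        congr 1
        have hπne : (π : ℂ) ≠ 0 := Complex.ofReal_ne_zero.2 Real.pi_pos.ne'
        field_simp
        push_cast
        ring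
      rw [integral_congr_ae hcong, show (-(π/2) + π : ℝ) = π/2 by ring,
        integral_Ioc_eq_integral_Ioo]
      exact hInt n
    rw [h1, smul_zero]
  -- conclude F = 0 in L2
  set FL := hFh.toLp F with hFL
  have hrepr : ∀ n, fourierBasis.repr FL n = 0 := by
    intro n
    rw [fourierBasis_repr]
    have h2 : fourierCoeff (FL : AddCircle π → ℂ) n = fourierCoeff F n := by
      apply integral_congr_ae
      filter_upwards [hFh.coeFn_toLp] with x hx
      rw [hx]
    rw [h2, hfc]
  have hFL0 : FL = 0 := by
    have h3 : fourierBasis.repr FL = 0 := by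
      apply lp.ext
      funext n
      simp [hrepr n]
    exact fourierBasis.repr.map_eq_zero_iff.1 h3
  have hFae : F =ᵐ[(AddCircle.haarAddCircle : Measure (AddCircle π))] 0 := by
    have h4 := hFh.coeFn_toLp
    rw [← hFL, hFL0] at h4
    exact h4.symm.trans (Lp.coeFn_zero ℂ 2 _)
  have hFvol : F =ᵐ[(volume : Measure (AddCircle π))] 0 := by
    rw [AddCircle.volume_eq_smul_haarAddCircle]
    exact Measure.ae_smul_measure hFae _
  have hGae : G =ᵐ[volume.restrict (Ioc (-(π/2)) (-(π/2)+π))] 0 := by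
    have hq := (AddCircle.measurePreserving_mk π (-(π/2))).quasiMeasurePreserving
    have h5 := hq.ae_eq_comp hFvol
    filter_upwards [h5, ae_restrict_mem measurableSet_Ioc] with θ h5θ hθ
    have h6 := hcoe θ hθ
    simp only [Function.comp_apply, Pi.zero_apply] at h5θ ⊢
    rw [← h6]
    exact h5θ
  have hftan : ∀ᵐ θ ∂(volume.restrict (Ioo (-(π/2)) (π/2))), f (Real.tan θ) = 0 := by
    have hsub : Ioo (-(π/2)) (π/2) ⊆ Ioc (-(π/2)) (-(π/2)+π) := by
      rw [show (-(π/2) + π : ℝ) = π/2 by ring]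
      exact Ioo_subset_Ioc_self
    filter_upwards [ae_restrict_of_ae_restrict_of_subset hsub hGae,
      ae_restrict_mem measurableSet_Ioo] with θ h1 h2
    have hc : Real.cos θ ≠ 0 := (Real.cos_pos_of_mem_Ioo h2).ne'
    have h3 : (Complex.I * Complex.exp (-(θ:ℂ)*Complex.I) * (((Real.cos θ)⁻¹ : ℝ) : ℂ)) ≠ 0 := by
      refine mul_ne_zero (mul_ne_zero Complex.I_ne_zero (Complex.exp_ne_zero _)) ?_
      exact Complex.ofReal_ne_zero.2 (inv_ne_zero hc)
    simp only [hG, Pi.zero_apply] at h1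
    exact (mul_eq_zero.1 h1).resolve_left h3
  have hzero : ∫ t : ℝ, ‖f t‖^2 = 0 := by
    rw [cov (fun t => ‖f t‖^2)]
    apply integral_eq_zero_of_ae
    filter_upwards [hftan] with θ hθ
    simp [hθ]
  have hnsq : (fun t => ‖f t‖^2) =ᵐ[volume] 0 :=
    (integral_eq_zero_iff_of_nonneg_ae
      (Filter.Eventually.of_forall fun t => by positivity) hfsq).1 hzero
  have hfae : ⇑f =ᵐ[(volume : Measure ℝ)] 0 := by
    filter_upwards [hnsq] with t ht
    simp only [Pi.zero_apply] at ht ⊢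
    have := pow_eq_zero_iff (n := 2) (by norm_num) |>.1 ht
    simpa using this
  exact Lp.eq_zero_iff_ae_eq_zero.2 hfae

theorem stmt_5 (a : ℤ → ℝ → ℂ)
    (ha : ∀ (n : ℤ) (t : ℝ),
      a n t = ((t : ℂ) - Complex.I) ^ n / ((t : ℂ) + Complex.I) ^ (n + 1)) :
    ∃ h : ∀ n : ℤ, MemLp (a n) 2 (volume : Measure ℝ),
      Orthonormal ℂ (fun n : ℤ =>
        ((Real.sqrt Real.pi : ℂ))⁻¹ • ((h n).toLp (a n))) ∧
      (Submodule.span ℂ (Set.range (fun n : ℤ =>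
        ((Real.sqrt Real.pi : ℂ))⁻¹ • ((h n).toLp (a n))))).topologicalClosure = ⊤ := by
  have hfun : ∀ n, a n = fun t : ℝ => ((t:ℂ) - Complex.I)^n / ((t:ℂ) + Complex.I)^(n+1) :=
    fun n => funext (ha n)
  have h : ∀ n : ℤ, MemLp (a n) 2 (volume : Measure ℝ) := by
    intro n; rw [hfun n]; exact memA n
  have hsπ : (Real.sqrt π : ℝ) ≠ 0 := (Real.sqrt_pos.2 Real.pi_pos).ne'
  have hsπC : ((Real.sqrt π : ℝ) : ℂ) ≠ 0 := Complex.ofReal_ne_zero.2 hsπ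
  have hin : ∀ n m : ℤ, (inner ℂ ((h n).toLp (a n)) ((h m).toLp (a m)) : ℂ)
      = if n = m then (π:ℂ) else 0 := by
    intro n m
    rw [MeasureTheory.L2.inner_def]
    rw [← integral_conj_mul n m]
    apply integral_congr_ae
    filter_upwards [(h n).coeFn_toLp, (h m).coeFn_toLp] with t h1 h2
    rw [RCLike.inner_apply, h1, h2, ha n t, ha m t, mul_comm]
  refine ⟨h, ?_, ?_⟩
  · -- orthonormality
    rw [orthonormal_iff_ite]
    intro i j
    rw [inner_smul_left, inner_smul_right, hin i j]
    rw [map_inv₀, Complex.conj_ofReal]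
    by_cases hij : i = j
    · simp only [hij, if_true, if_pos rfl]
      rw [← mul_assoc, ← mul_inv, ← Complex.ofReal_mul, Real.mul_self_sqrt Real.pi_pos.le]
      exact inv_mul_cancel₀ (Complex.ofReal_ne_zero.2 Real.pi_pos.ne')
    · simp [hij]
  · -- completeness
    rw [Submodule.topologicalClosure_eq_top_iff, Submodule.eq_bot_iff]
    intro f hf0
    have hperp : ∀ n : ℤ,
        (inner ℂ (((Real.sqrt Real.pi : ℂ))⁻¹ • ((h n).toLp (a n))) f : ℂ) = 0 := by
      intro n
      exact (Submodule.mem_orthogonal _ f).1 hf0 _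
        (Submodule.subset_span (Set.mem_range_self n))
    have h0 : ∀ n : ℤ, ∫ t : ℝ, (starRingEnd ℂ)
        (((t:ℂ) - Complex.I)^n / ((t:ℂ) + Complex.I)^(n+1)) * f t = 0 := by
      intro n
      have h1 := hperp n
      rw [inner_smul_left] at h1
      have h2 : (inner ℂ ((h n).toLp (a n)) f : ℂ) = 0 := by
        have hcne : (starRingEnd ℂ) ((((Real.sqrt Real.pi : ℝ) : ℂ))⁻¹) ≠ 0 := by
          simp [hsπC]
        exact (mul_eq_zero.1 h1).resolve_left hcne
      rw [MeasureTheory.L2.inner_def] at h2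
      rw [← h2]
      apply integral_congr_ae
      filter_upwards [(h n).coeFn_toLp] with t h3
      rw [RCLike.inner_apply, h3, ha n t, mul_comm]
    exact complete_aux f h0
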